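/- arXiv:1908.07659 — 3 statements merged into one kernel-verified Lean document; each statement's English description precedes it below -/
import Mathlib

section
/- Let d ≥ 1, let Σ be a real symmetric positive-definite d×d matrix, let μ₁, μ₂ ∈ ℝ^d, and let λ > 0. Define the Gaussian densities f(x) = det(2πΣ)^{−1/2}·exp(−½ (x−μ₁)ᵀ Σ⁻¹ (x−μ₁)) and g(x) = det(2πΣ)^{−1/2}·exp(−½ (x−μ₂)ᵀ Σ⁻¹ (x−μ₂)) on ℝ^d. Then ∫_{ℝ^d} [ (1/λ)(g(x)/f(x))^{λ+1} − ((λ+1)/λ)(g(x)/f(x)) + 1 ]·f(x) dx = (1/λ)·exp( (λ(λ+1)/2)·(μ₂−μ₁)ᵀ Σ⁻¹ (μ₂−μ₁) ) − 1/λ. -/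
open Real Set MeasureTheory Matrix

lemma euclid_dot (d : ℕ) (v : EuclideanSpace ℝ (Fin d)) :
    (MeasurableEquiv.toLp 2 (Fin d → ℝ)).symm v ⬝ᵥ (MeasurableEquiv.toLp 2 (Fin d → ℝ)).symm v
      = ‖v‖ ^ 2 := by
  rw [EuclideanSpace.norm_eq, Real.sq_sqrt (by positivity)]
  simp [dotProduct, sq]

lemma std_integrable_euclid (d : ℕ) :
    Integrable (fun v : EuclideanSpace ℝ (Fin d) => Real.exp (-(1/2) * ‖v‖ ^ 2)) := by
  have h0 := (GaussianFourier.integrable_cexp_neg_mul_sq_norm_add (V := EuclideanSpace ℝ (Fin d))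
      (b := (1/2 : ℂ)) (by norm_num) 0 0).re
  refine h0.congr (Filter.Eventually.of_forall fun v => ?_)
  simp only [zero_mul, add_zero, RCLike.re_to_complex]
  rw [show (-(1/2 : ℂ)) * (‖v‖ : ℂ) ^ 2 = ((-(1/2) * ‖v‖^2 : ℝ) : ℂ) by push_cast; ring,
    Complex.exp_ofReal_re]

lemma std_integrable (d : ℕ) :
    Integrable (fun y : Fin d → ℝ => Real.exp (-(1/2) * (y ⬝ᵥ y))) := by
  have hmp := EuclideanSpace.volume_preserving_symm_measurableEquiv_toLp (Fin d)
  refine (hmp.integrable_comp_emb (MeasurableEquiv.measurableEmbedding _)).mp ?_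
  refine (std_integrable_euclid d).congr (Filter.Eventually.of_forall fun v => ?_)
  simp only [Function.comp]
  rw [euclid_dot]

lemma std_integral (d : ℕ) :
    ∫ y : Fin d → ℝ, Real.exp (-(1/2) * (y ⬝ᵥ y)) = (2*π) ^ ((d : ℝ)/2) := by
  have hmp := EuclideanSpace.volume_preserving_symm_measurableEquiv_toLp (Fin d)
  rw [← hmp.integral_comp (MeasurableEquiv.measurableEmbedding _)]
  have : ∀ v : EuclideanSpace ℝ (Fin d),
      Real.exp (-(1/2) * ((MeasurableEquiv.toLp 2 (Fin d → ℝ)).symm v ⬝ᵥ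
        (MeasurableEquiv.toLp 2 (Fin d → ℝ)).symm v)) = Real.exp (-(1/2 : ℝ) * ‖v‖^2) := by
    intro v; rw [euclid_dot]
  rw [integral_congr_ae (Filter.Eventually.of_forall this)]
  have := GaussianFourier.integral_rexp_neg_mul_sq_norm (V := EuclideanSpace ℝ (Fin d)) (b := (1/2:ℝ)) (by norm_num)
  simp only [neg_mul] at this ⊢
  rw [this, finrank_euclideanSpace_fin]
  congr 1
  ring

open scoped MatrixOrder in
lemma gauss_cov {d : ℕ} {A : Matrix (Fin d) (Fin d) ℝ} (hA : A.PosDef) :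
    Integrable (fun x : Fin d → ℝ => Real.exp (-(1/2) * (x ⬝ᵥ (A *ᵥ x)))) ∧
    ∫ x : Fin d → ℝ, Real.exp (-(1/2) * (x ⬝ᵥ (A *ᵥ x)))
      = (2*π) ^ ((d : ℝ)/2) / Real.sqrt A.det := by
  classical
  have hAps := hA.posSemidef
  set R := CFC.sqrt A with hRdef
  have hRps : R.PosSemidef := (CFC.sqrt_nonneg A).posSemidef
  have hRR : R * R = A := CFC.sqrt_mul_sqrt_self A hAps.nonneg
  have hRsym : Rᵀ = R := by
    have h := hRps.isHermitian
    rw [Matrix.IsHermitian] at h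
    simpa using h
  have hdet2 : R.det * R.det = A.det := by rw [← Matrix.det_mul, hRR]
  have hdetA : 0 < A.det := hA.det_pos
  have hdetnn : 0 ≤ R.det := by
    rw [hRps.isHermitian.det_eq_prod_eigenvalues]
    exact Finset.prod_nonneg fun i _ => hRps.eigenvalues_nonneg i
  have hRdetpos : 0 < R.det := by
    rcases hdetnn.lt_or_eq with h | h
    · exact h
    · exfalso; rw [← h] at hdet2; simp at hdet2; exact hdetA.ne' hdet2.symm
  have hsqrt : Real.sqrt A.det = R.det := by
    rw [← hdet2, Real.sqrt_mul_self hdetnn]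
  have key : ∀ x : Fin d → ℝ, x ⬝ᵥ (A *ᵥ x) = (R *ᵥ x) ⬝ᵥ (R *ᵥ x) := by
    intro x
    have h1 : x ᵥ* R = R *ᵥ x := by rw [← Matrix.vecMul_transpose, hRsym]
    rw [← hRR, ← Matrix.mulVec_mulVec, Matrix.dotProduct_mulVec x R, h1]
  have hinv : Invertible R := R.invertibleOfIsUnitDet (isUnit_iff_ne_zero.mpr hRdetpos.ne')
  have hemb : MeasurableEmbedding (⇑(Matrix.toLin' R)) := by
    have h2 := ((R.toLinearEquiv' hinv).toContinuousLinearEquiv.toHomeomorph).measurableEmbedding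
    have h3 : ⇑((R.toLinearEquiv' hinv).toContinuousLinearEquiv.toHomeomorph)
        = ⇑(Matrix.toLin' R) := rfl
    rwa [h3] at h2
  have hmap : MeasureTheory.Measure.map (Matrix.toLin' R) volume
      = ENNReal.ofReal ((R.det)⁻¹) • volume := by
    have := Real.map_matrix_volume_pi_eq_smul_volume_pi (M := R) hRdetpos.ne'
    rwa [abs_of_pos (inv_pos.mpr hRdetpos)] at this
  set gstd : (Fin d → ℝ) → ℝ := fun y => Real.exp (-(1/2) * (y ⬝ᵥ y)) with hgstd
  have hcomp : (fun x : Fin d → ℝ => Real.exp (-(1/2) * (x ⬝ᵥ (A *ᵥ x))))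
      = gstd ∘ (Matrix.toLin' R) := by
    funext x
    simp only [Function.comp, hgstd, Matrix.toLin'_apply, key]
  have hint1 : Integrable gstd (MeasureTheory.Measure.map (Matrix.toLin' R) volume) := by
    rw [hmap]
    exact (std_integrable d).smul_measure ENNReal.ofReal_ne_top
  constructor
  · rw [hcomp]
    exact hemb.integrable_map_iff.mp hint1
  · rw [hcomp]
    have hmeas : AEMeasurable (⇑(Matrix.toLin' R)) volume :=
      (LinearMap.continuous_on_pi _).measurable.aemeasurable
    have hgc : Continuous gstd := by
      rw [hgstd]
      refine Real.continuous_exp.comp (continuous_const.mul ?_)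
      unfold dotProduct
      exact continuous_finset_sum _ fun i _ => (continuous_apply i).mul (continuous_apply i)
    have hsm : AEStronglyMeasurable gstd (MeasureTheory.Measure.map (⇑(Matrix.toLin' R)) volume) :=
      hgc.aestronglyMeasurable
    rw [show (∫ x : Fin d → ℝ, (gstd ∘ ⇑(Matrix.toLin' R)) x)
        = ∫ x : Fin d → ℝ, gstd ((Matrix.toLin' R) x) from rfl]
    rw [← MeasureTheory.integral_map hmeas hsm, hmap, MeasureTheory.integral_smul_measure,
      std_integral d, ENNReal.toReal_ofReal (inv_nonneg.mpr hRdetpos.le), smul_eq_mul, hsqrt]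
    rw [div_eq_mul_inv]; ring

lemma gauss_mean' {d : ℕ} {A : Matrix (Fin d) (Fin d) ℝ} (hA : A.PosDef) (m : Fin d → ℝ) :
    Integrable (fun x : Fin d → ℝ => Real.exp (-(1/2) * ((x - m) ⬝ᵥ (A *ᵥ (x - m))))) ∧
    ∫ x : Fin d → ℝ, Real.exp (-(1/2) * ((x - m) ⬝ᵥ (A *ᵥ (x - m))))
      = (2*π) ^ ((d : ℝ)/2) / Real.sqrt A.det := by
  obtain ⟨h1, h2⟩ := gauss_cov hA
  refine ⟨h1.comp_sub_right m, ?_⟩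
  rw [← h2]
  exact integral_sub_right_eq_self (μ := volume)
    (fun x : Fin d → ℝ => Real.exp (-(1/2) * (x ⬝ᵥ (A *ᵥ x)))) m

/-- For Gaussian densities `f, g` on `ℝ^d` with common positive-definite covariance `Σ`
and means `μ₁, μ₂`, the λ-Bregman divergence `∫ G_λ(g/f)·f` equals
`(1/λ)·exp((λ(λ+1)/2)·(μ₂−μ₁)ᵀ Σ⁻¹ (μ₂−μ₁)) − 1/λ`. -/
theorem stmt_5 (d : ℕ) (hd : 1 ≤ d) (S : Matrix (Fin d) (Fin d) ℝ) (hS : S.PosDef)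
    (μ₁ μ₂ : Fin d → ℝ) (lam : ℝ) (hlam : 0 < lam)
    (f g : (Fin d → ℝ) → ℝ)
    (hf : f = fun x => (Real.sqrt (((2 * π) • S).det))⁻¹ *
        Real.exp (-(1 / 2) * ((x - μ₁) ⬝ᵥ (S⁻¹ *ᵥ (x - μ₁)))))
    (hg : g = fun x => (Real.sqrt (((2 * π) • S).det))⁻¹ *
        Real.exp (-(1 / 2) * ((x - μ₂) ⬝ᵥ (S⁻¹ *ᵥ (x - μ₂))))) :
    ∫ x : Fin d → ℝ,
        ((1 / lam) * (g x / f x) ^ (lam + 1) - ((lam + 1) / lam) * (g x / f x) + 1) * f x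
      = (1 / lam) *
          Real.exp ((lam * (lam + 1) / 2) * ((μ₂ - μ₁) ⬝ᵥ (S⁻¹ *ᵥ (μ₂ - μ₁)))) - 1 / lam := by
  have hπ : (0:ℝ) < 2*π := by positivity
  set A := S⁻¹ with hAdef
  have hA : A.PosDef := hS.inv
  have hSsym : Sᵀ = S := by
    have h := hS.isHermitian
    rw [Matrix.IsHermitian] at h
    simpa using h
  have hAsym : Aᵀ = A := by rw [hAdef, Matrix.transpose_nonsing_inv, hSsym]
  have hB : ∀ u v : Fin d → ℝ, u ⬝ᵥ (A *ᵥ v) = v ⬝ᵥ (A *ᵥ u) := by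
    intro u v
    have h1 : u ᵥ* A = A *ᵥ u := by rw [← Matrix.vecMul_transpose, hAsym]
    rw [Matrix.dotProduct_mulVec, h1, dotProduct_comm]
  have hdetS : 0 < S.det := hS.det_pos
  have hdet2S : ((2*π) • S).det = (2*π)^d * S.det := by
    rw [Matrix.det_smul]; simp
  have hsd : 0 < Real.sqrt (((2 * π) • S).det) := Real.sqrt_pos.mpr (by rw [hdet2S]; positivity)
  set c : ℝ := (Real.sqrt (((2 * π) • S).det))⁻¹ with hcdef
  have hcpos : 0 < c := inv_pos.mpr hsd
  have hpowsqrt : Real.sqrt ((2*π)^d) = (2*π) ^ ((d:ℝ)/2) := by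
    rw [Real.sqrt_eq_rpow, ← Real.rpow_natCast (2*π) d, ← Real.rpow_mul hπ.le]
    congr 1; ring
  have hIval : (2*π) ^ ((d:ℝ)/2) / Real.sqrt A.det = Real.sqrt (((2 * π) • S).det) := by
    rw [hAdef, Matrix.det_nonsing_inv, Ring.inverse_eq_inv', Real.sqrt_inv, div_inv_eq_mul, hdet2S,
      Real.sqrt_mul (by positivity), hpowsqrt]
  set m : Fin d → ℝ := μ₁ + (lam+1) • (μ₂ - μ₁) with hmdef
  obtain ⟨hint₁, hI₁⟩ := gauss_mean' hA μ₁
  obtain ⟨hint₂, hI₂⟩ := gauss_mean' hA μ₂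
  obtain ⟨hintm, hIm⟩ := gauss_mean' hA m
  set K : ℝ := (lam * (lam + 1) / 2) * ((μ₂ - μ₁) ⬝ᵥ (A *ᵥ (μ₂ - μ₁))) with hKdef
  -- bilinear expansion
  have expand1 : ∀ (u v : Fin d → ℝ) (t : ℝ), (u - t • v) ⬝ᵥ (A *ᵥ (u - t • v))
      = u ⬝ᵥ (A *ᵥ u) - 2*t*(u ⬝ᵥ (A *ᵥ v)) + t^2 * (v ⬝ᵥ (A *ᵥ v)) := by
    intro u v t
    simp only [Matrix.mulVec_sub, Matrix.mulVec_smul, dotProduct_sub, sub_dotProduct,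
      dotProduct_smul, smul_dotProduct, smul_eq_mul, hB v u]
    ring
  -- quadratic exponent identity
  have hquad : ∀ x : Fin d → ℝ,
      (-(1/2) * ((x - μ₂) ⬝ᵥ (A *ᵥ (x - μ₂))) - -(1/2) * ((x - μ₁) ⬝ᵥ (A *ᵥ (x - μ₁)))) * (lam+1)
        + (-(1/2) * ((x - μ₁) ⬝ᵥ (A *ᵥ (x - μ₁))))
      = K + (-(1/2) * ((x - m) ⬝ᵥ (A *ᵥ (x - m)))) := by
    intro x
    have h2 : x - μ₂ = (x - μ₁) - (1:ℝ) • (μ₂ - μ₁) := by rw [one_smul]; abel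
    have hm' : x - m = (x - μ₁) - (lam+1) • (μ₂ - μ₁) := by rw [hmdef]; abel
    rw [h2, hm', expand1, expand1, hKdef]
    ring
  -- pointwise identity for the integrand
  have hpt : ∀ x : Fin d → ℝ,
      ((1 / lam) * (g x / f x) ^ (lam + 1) - ((lam + 1) / lam) * (g x / f x) + 1) * f x
      = (1/lam) * Real.exp K * (c * Real.exp (-(1/2) * ((x - m) ⬝ᵥ (A *ᵥ (x - m)))))
        - ((lam+1)/lam) * g x + f x := by
    intro x
    set e₁ : ℝ := -(1/2) * ((x - μ₁) ⬝ᵥ (A *ᵥ (x - μ₁))) with he₁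
    set e₂ : ℝ := -(1/2) * ((x - μ₂) ⬝ᵥ (A *ᵥ (x - μ₂))) with he₂
    set em : ℝ := -(1/2) * ((x - m) ⬝ᵥ (A *ᵥ (x - m))) with hem
    have hfx : f x = c * Real.exp e₁ := by rw [hf]
    have hgx : g x = c * Real.exp e₂ := by rw [hg]
    have hratio : g x / f x = Real.exp (e₂ - e₁) := by
      rw [hfx, hgx, mul_div_mul_left _ _ (ne_of_gt hcpos), ← Real.exp_sub]
    have hpow : (g x / f x) ^ (lam + 1) = Real.exp ((e₂ - e₁) * (lam+1)) := by
      rw [hratio, Real.rpow_def_of_pos (Real.exp_pos _), Real.log_exp]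
    have hq : (e₂ - e₁) * (lam+1) + e₁ = K + em := by
      have := hquad x
      rw [← he₁, ← he₂, ← hem] at this
      linarith [this]
    have h1 : Real.exp ((e₂ - e₁) * (lam+1)) * Real.exp e₁ = Real.exp K * Real.exp em := by
      rw [← Real.exp_add, ← Real.exp_add, hq]
    have h2 : Real.exp (e₂ - e₁) * Real.exp e₁ = Real.exp e₂ := by
      rw [← Real.exp_add]; congr 1; ring
    rw [hpow, hratio, hfx, hgx]
    linear_combination (1/lam * c) * h1 - ((lam+1)/lam * c) * h2
  rw [integral_congr_ae (Filter.Eventually.of_forall hpt)]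
  -- integrability
  have hf_int : Integrable f := by rw [hf]; exact hint₁.const_mul c
  have hg_int : Integrable g := by rw [hg]; exact hint₂.const_mul c
  have h1_int : Integrable (fun x : Fin d → ℝ =>
      (1/lam) * Real.exp K * (c * Real.exp (-(1/2) * ((x - m) ⬝ᵥ (A *ᵥ (x - m)))))) := by
    exact (hintm.const_mul c).const_mul _
  have h2_int : Integrable (fun x : Fin d → ℝ => ((lam+1)/lam) * g x) := hg_int.const_mul _
  have h12_int : Integrable (fun x : Fin d → ℝ =>
      (1/lam) * Real.exp K * (c * Real.exp (-(1/2) * ((x - m) ⬝ᵥ (A *ᵥ (x - m)))))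
        - ((lam+1)/lam) * g x) := h1_int.sub h2_int
  rw [integral_add h12_int hf_int, integral_sub h1_int h2_int]
  have hintc : ∀ μ' : Fin d → ℝ,
      (∫ x : Fin d → ℝ, Real.exp (-(1/2) * ((x - μ') ⬝ᵥ (A *ᵥ (x - μ')))))
        = (2*π) ^ ((d : ℝ)/2) / Real.sqrt A.det → True := fun _ _ => trivial
  have e1 : ∫ x : Fin d → ℝ,
      (1/lam) * Real.exp K * (c * Real.exp (-(1/2) * ((x - m) ⬝ᵥ (A *ᵥ (x - m)))))
      = (1/lam) * Real.exp K * (c * ((2*π) ^ ((d : ℝ)/2) / Real.sqrt A.det)) := by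
    rw [integral_const_mul, integral_const_mul, hIm]
  have e2 : ∫ x : Fin d → ℝ, ((lam+1)/lam) * g x = ((lam+1)/lam) * (c * ((2*π) ^ ((d : ℝ)/2) / Real.sqrt A.det)) := by
    rw [integral_const_mul, hg, integral_const_mul, hI₂]
  have e3 : ∫ x : Fin d → ℝ, f x = c * ((2*π) ^ ((d : ℝ)/2) / Real.sqrt A.det) := by
    rw [hf, integral_const_mul, hI₁]
  rw [e1, e2, e3]
  have hone : c * ((2*π) ^ ((d : ℝ)/2) / Real.sqrt A.det) = 1 := by
    rw [hIval, hcdef, inv_mul_cancel₀ (ne_of_gt hsd)]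
  rw [hone]
  field_simp
  ring
end

section
/- Let d ≥ 1, λ > 0, let Σ₁, Σ₂ be real symmetric positive-definite d×d matrices and μ₁, μ₂ ∈ ℝ^d. Assume the matrix (λ+1)Σ₂⁻¹ − λΣ₁⁻¹ is positive definite, and set Σ̃_λ = ((λ+1)Σ₂⁻¹ − λΣ₁⁻¹)⁻¹ and μ̃_λ = Σ̃_λ·((λ+1)Σ₂⁻¹μ₂ − λΣ₁⁻¹μ₁). Let f and g be the densities of N_d(μ₁, Σ₁) and N_d(μ₂, Σ₂) respectively. Then ∫_{ℝ^d} [ (1/λ)(g/f)^{λ+1} − ((λ+1)/λ)(g/f) + 1 ]·f dx = (1/λ)·( (det(Σ₁Σ₂⁻¹))^{λ+1}·det(Σ̃_λ)/det(Σ₁) )^{1/2} · exp( −((λ+1)/2)·μ₂ᵀΣ₂⁻¹μ₂ + (λ/2)·μ₁ᵀΣ₁⁻¹μ₁ + ½·μ̃_λᵀ Σ̃_λ⁻¹ μ̃_λ ) − 1/λ. -/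
open Real Set MeasureTheory Matrix

variable {d : ℕ}

lemma sqrt_pow_nat (x : ℝ) (hx : 0 ≤ x) (n : ℕ) : Real.sqrt (x ^ n) = Real.sqrt x ^ n := by
  induction n with
  | zero => simp
  | succ n ih => rw [pow_succ, pow_succ, Real.sqrt_mul (by positivity), ih]

lemma dot_symm {A : Matrix (Fin d) (Fin d) ℝ} (hA : Aᵀ = A) (x y : Fin d → ℝ) :
    x ⬝ᵥ (A *ᵥ y) = y ⬝ᵥ (A *ᵥ x) := by
  rw [Matrix.dotProduct_mulVec, ← Matrix.mulVec_transpose, hA, dotProduct_comm]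

lemma posdef_symm {A : Matrix (Fin d) (Fin d) ℝ} (hA : A.PosDef) : Aᵀ = A := by
  have := hA.isHermitian
  rwa [Matrix.IsHermitian, Matrix.conjTranspose_eq_transpose_of_trivial] at this

lemma int_std : Integrable (fun x : Fin d → ℝ => Real.exp (-(1/2) * (x ⬝ᵥ x))) ∧
    ∫ x : Fin d → ℝ, Real.exp (-(1/2) * (x ⬝ᵥ x)) = Real.sqrt ((2*π)^d) := by
  have key : ∀ x : Fin d → ℝ, Real.exp (-(1/2) * (x ⬝ᵥ x)) =
      ∏ i, Real.exp (-(1/2) * (x i)^2) := by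
    intro x
    rw [← Real.exp_sum]
    congr 1
    simp [dotProduct, Finset.mul_sum, pow_two]
  have h1d : Integrable (fun t : ℝ => Real.exp (-(1/2) * t^2)) := by
    have := integrable_exp_neg_mul_sq (b := (1/2 : ℝ)) (by norm_num)
    simpa using this
  constructor
  · simp_rw [key]
    exact Integrable.fintype_prod (f := fun _ : Fin d => fun t : ℝ => Real.exp (-(1/2) * t^2))
      (fun _ => h1d)
  · simp_rw [key]
    rw [MeasureTheory.integral_fintype_prod_volume_eq_pow (ι := Fin d) (fun t : ℝ => Real.exp (-(1/2) * t^2))]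
    have h1 : ∫ t : ℝ, Real.exp (-(1/2) * t^2) = Real.sqrt (2*π) := by
      have := integral_gaussian (1/2)
      simp only [neg_mul] at this ⊢
      rw [this]
      rw [show π / (1/2 : ℝ) = 2 * π by ring]
    rw [h1, Fintype.card_fin, ← sqrt_pow_nat _ (by positivity)]

open scoped MatrixOrder in
lemma gauss0 {A : Matrix (Fin d) (Fin d) ℝ} (hA : A.PosDef) :
    Integrable (fun x : Fin d → ℝ => Real.exp (-(1/2) * (x ⬝ᵥ (A *ᵥ x)))) ∧
    ∫ x : Fin d → ℝ, Real.exp (-(1/2) * (x ⬝ᵥ (A *ᵥ x)))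
      = Real.sqrt ((2*π)^d / A.det) := by
  classical
  set S := CFC.sqrt A with hSdef
  have hSS : S * S = A := CFC.sqrt_mul_sqrt_self A hA.posSemidef.nonneg
  have hSps : S.PosSemidef := (CFC.sqrt_nonneg A).posSemidef
  have hSsym : Sᵀ = S := by
    have := hSps.1
    rwa [Matrix.IsHermitian, Matrix.conjTranspose_eq_transpose_of_trivial] at this
  have hdetA : 0 < A.det := hA.det_pos
  have hdetS_sq : S.det * S.det = A.det := by rw [← Matrix.det_mul, hSS]
  have hdetS_nonneg : 0 ≤ S.det := by
    rw [hSps.1.det_eq_prod_eigenvalues]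
    exact Finset.prod_nonneg fun i _ => by exact_mod_cast hSps.eigenvalues_nonneg i
  have hdetS_pos : 0 < S.det := by
    rcases lt_or_eq_of_le hdetS_nonneg with h | h
    · exact h
    · exfalso; rw [← h] at hdetS_sq; simp at hdetS_sq; linarith
  have hdetS : S.det = Real.sqrt A.det := by
    rw [← hdetS_sq, ← pow_two, Real.sqrt_sq hdetS_nonneg]
  have hquad : ∀ x : Fin d → ℝ, (S *ᵥ x) ⬝ᵥ (S *ᵥ x) = x ⬝ᵥ (A *ᵥ x) := by
    intro x
    calc (S *ᵥ x) ⬝ᵥ (S *ᵥ x) = x ⬝ᵥ (S *ᵥ (S *ᵥ x)) := dot_symm hSsym _ _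
    _ = x ⬝ᵥ (A *ᵥ x) := by rw [Matrix.mulVec_mulVec, hSS]
  have hinv : Invertible S := S.invertibleOfIsUnitDet (isUnit_iff_ne_zero.2 hdetS_pos.ne')
  let e : (Fin d → ℝ) ≃ₗ[ℝ] (Fin d → ℝ) := Matrix.toLinearEquiv' S hinv
  have he : ∀ x, e x = S *ᵥ x := fun x => by
    show Matrix.toLin' S x = S *ᵥ x
    rw [Matrix.toLin'_apply]
  have hemeas : MeasurableEmbedding (⇑e) := by
    exact e.toContinuousLinearEquiv.toHomeomorph.measurableEmbedding
  have hecoe : (⇑e : (Fin d → ℝ) → (Fin d → ℝ)) = ⇑(Matrix.toLin' S) := by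
    funext x; rw [he x, Matrix.toLin'_apply]
  have hmap : Measure.map (⇑e) volume = ENNReal.ofReal |S.det|⁻¹ • volume := by
    rw [hecoe, Real.map_matrix_volume_pi_eq_smul_volume_pi hdetS_pos.ne', abs_inv]
  set h : (Fin d → ℝ) → ℝ := fun y => Real.exp (-(1/2) * (y ⬝ᵥ y)) with hh
  have hcomp : (fun x : Fin d → ℝ => Real.exp (-(1/2) * (x ⬝ᵥ (A *ᵥ x)))) = h ∘ ⇑e := by
    funext x; simp only [Function.comp_apply, hh, he x, hquad x]
  have hconst : ENNReal.ofReal |S.det|⁻¹ ≠ 0 ∧ ENNReal.ofReal |S.det|⁻¹ ≠ ⊤ := by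
    constructor
    · simp [ENNReal.ofReal_eq_zero, abs_of_pos hdetS_pos]
      positivity
    · exact ENNReal.ofReal_ne_top
  constructor
  · rw [hcomp, ← MeasurableEmbedding.integrable_map_iff hemeas, hmap,
      integrable_smul_measure hconst.1 hconst.2]
    exact int_std.1
  · rw [hcomp]
    have : ∫ x, (h ∘ ⇑e) x = ∫ y, h y ∂(Measure.map (⇑e) volume) :=
      (hemeas.integral_map h).symm
    rw [this, hmap, integral_smul_measure, int_std.2,
      ENNReal.toReal_ofReal (by positivity), abs_of_pos hdetS_pos, hdetS, smul_eq_mul,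
      Real.sqrt_div (by positivity), div_eq_mul_inv, mul_comm]

lemma expand_quad {A : Matrix (Fin d) (Fin d) ℝ} (hA : Aᵀ = A) (x μ : Fin d → ℝ) :
    (x - μ) ⬝ᵥ (A *ᵥ (x - μ))
      = x ⬝ᵥ (A *ᵥ x) - 2 * ((A *ᵥ μ) ⬝ᵥ x) + μ ⬝ᵥ (A *ᵥ μ) := by
  have h1 : μ ⬝ᵥ (A *ᵥ x) = (A *ᵥ μ) ⬝ᵥ x := by
    rw [dot_symm hA, dotProduct_comm]
  have h2 : x ⬝ᵥ (A *ᵥ μ) = (A *ᵥ μ) ⬝ᵥ x := dotProduct_comm _ _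
  rw [Matrix.mulVec_sub, dotProduct_sub, sub_dotProduct,
    sub_dotProduct, h1, h2]
  ring

lemma gauss_lin {A : Matrix (Fin d) (Fin d) ℝ} (hA : A.PosDef) (b : Fin d → ℝ) (c : ℝ) :
    Integrable (fun x : Fin d → ℝ => Real.exp (-(1/2) * (x ⬝ᵥ (A *ᵥ x)) + b ⬝ᵥ x + c)) ∧
    ∫ x : Fin d → ℝ, Real.exp (-(1/2) * (x ⬝ᵥ (A *ᵥ x)) + b ⬝ᵥ x + c)
      = Real.sqrt ((2*π)^d / A.det) * Real.exp ((1/2) * (b ⬝ᵥ (A⁻¹ *ᵥ b)) + c) := by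
  have hAsym : Aᵀ = A := posdef_symm hA
  have hdet : A.det ≠ 0 := hA.det_pos.ne'
  set m : Fin d → ℝ := A⁻¹ *ᵥ b with hm
  have hAm : A *ᵥ m = b := by
    rw [hm, Matrix.mulVec_mulVec, Matrix.mul_nonsing_inv _ (isUnit_iff_ne_zero.2 hdet), Matrix.one_mulVec]
  have hbm : b ⬝ᵥ m = b ⬝ᵥ (A⁻¹ *ᵥ b) := rfl
  have hmAm : m ⬝ᵥ (A *ᵥ m) = b ⬝ᵥ (A⁻¹ *ᵥ b) := by
    rw [hAm, dotProduct_comm, hbm]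
  have key : ∀ x : Fin d → ℝ,
      -(1/2) * (x ⬝ᵥ (A *ᵥ x)) + b ⬝ᵥ x + c
        = -(1/2) * ((x - m) ⬝ᵥ (A *ᵥ (x - m))) + ((1/2) * (b ⬝ᵥ (A⁻¹ *ᵥ b)) + c) := by
    intro x
    rw [expand_quad hAsym, hAm, dotProduct_comm m b, hbm]
    ring
  have heq : ∀ x : Fin d → ℝ,
      Real.exp (-(1/2) * (x ⬝ᵥ (A *ᵥ x)) + b ⬝ᵥ x + c)
        = Real.exp (-(1/2) * ((x - m) ⬝ᵥ (A *ᵥ (x - m))))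
          * Real.exp ((1/2) * (b ⬝ᵥ (A⁻¹ *ᵥ b)) + c) := by
    intro x
    rw [← Real.exp_add, key x]
  constructor
  · simp_rw [heq]
    apply Integrable.mul_const
    have := (gauss0 hA).1
    exact this.comp_sub_right m
  · simp_rw [heq]
    rw [MeasureTheory.integral_mul_const]
    congr 1
    rw [MeasureTheory.integral_sub_right_eq_self (μ := volume)
      (fun x : Fin d → ℝ => Real.exp (-(1/2) * (x ⬝ᵥ (A *ᵥ x)))) m, (gauss0 hA).2]

lemma gaussN {A : Matrix (Fin d) (Fin d) ℝ} (hA : A.PosDef) (μ : Fin d → ℝ) :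
    Integrable (fun x : Fin d → ℝ => Real.exp (-(1/2) * ((x - μ) ⬝ᵥ (A *ᵥ (x - μ))))) ∧
    ∫ x : Fin d → ℝ, Real.exp (-(1/2) * ((x - μ) ⬝ᵥ (A *ᵥ (x - μ))))
      = Real.sqrt ((2*π)^d / A.det) := by
  have hAsym : Aᵀ = A := posdef_symm hA
  have hdet : A.det ≠ 0 := hA.det_pos.ne'
  have key : ∀ x : Fin d → ℝ,
      Real.exp (-(1/2) * ((x - μ) ⬝ᵥ (A *ᵥ (x - μ))))
        = Real.exp (-(1/2) * (x ⬝ᵥ (A *ᵥ x)) + (A *ᵥ μ) ⬝ᵥ x + (-(1/2) * (μ ⬝ᵥ (A *ᵥ μ)))) := by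
    intro x
    congr 1
    rw [expand_quad hAsym]
    ring
  have hinv : A⁻¹ *ᵥ (A *ᵥ μ) = μ := by
    rw [Matrix.mulVec_mulVec, Matrix.nonsing_inv_mul _ (isUnit_iff_ne_zero.2 hdet),
      Matrix.one_mulVec]
  have hval : (1/2) * ((A *ᵥ μ) ⬝ᵥ (A⁻¹ *ᵥ (A *ᵥ μ))) + (-(1/2) * (μ ⬝ᵥ (A *ᵥ μ))) = 0 := by
    rw [hinv, dotProduct_comm]
    ring
  constructor
  · simp_rw [key]
    exact (gauss_lin hA (A *ᵥ μ) (-(1/2) * (μ ⬝ᵥ (A *ᵥ μ)))).1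
  · simp_rw [key]
    rw [(gauss_lin hA (A *ᵥ μ) (-(1/2) * (μ ⬝ᵥ (A *ᵥ μ)))).2, hval, Real.exp_zero, mul_one]

/-- Closed form of the λ-Bregman divergence between two multivariate normal densities
`f ~ N_d(μ₁, Σ₁)` and `g ~ N_d(μ₂, Σ₂)`, assuming `(λ+1)Σ₂⁻¹ − λΣ₁⁻¹` is positive
definite, with `Σ̃_λ = ((λ+1)Σ₂⁻¹ − λΣ₁⁻¹)⁻¹` and
`μ̃_λ = Σ̃_λ·((λ+1)Σ₂⁻¹μ₂ − λΣ₁⁻¹μ₁)`. -/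
theorem stmt_6 (d : ℕ) (hd : 1 ≤ d) (lam : ℝ) (hlam : 0 < lam)
    (S₁ S₂ : Matrix (Fin d) (Fin d) ℝ) (hS₁ : S₁.PosDef) (hS₂ : S₂.PosDef)
    (μ₁ μ₂ : Fin d → ℝ)
    (hpos : ((lam + 1) • S₂⁻¹ - lam • S₁⁻¹).PosDef)
    (St : Matrix (Fin d) (Fin d) ℝ) (hSt : St = ((lam + 1) • S₂⁻¹ - lam • S₁⁻¹)⁻¹)
    (μt : Fin d → ℝ) (hμt : μt = St *ᵥ ((lam + 1) • (S₂⁻¹ *ᵥ μ₂) - lam • (S₁⁻¹ *ᵥ μ₁)))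
    (f g : (Fin d → ℝ) → ℝ)
    (hf : f = fun x => (Real.sqrt (((2 * π) • S₁).det))⁻¹ *
        Real.exp (-(1 / 2) * ((x - μ₁) ⬝ᵥ (S₁⁻¹ *ᵥ (x - μ₁)))))
    (hg : g = fun x => (Real.sqrt (((2 * π) • S₂).det))⁻¹ *
        Real.exp (-(1 / 2) * ((x - μ₂) ⬝ᵥ (S₂⁻¹ *ᵥ (x - μ₂))))) :
    ∫ x : Fin d → ℝ,
        ((1 / lam) * (g x / f x) ^ (lam + 1) - ((lam + 1) / lam) * (g x / f x) + 1) * f x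
      = (1 / lam) * (((S₁ * S₂⁻¹).det ^ (lam + 1) * St.det / S₁.det) ^ ((1 : ℝ) / 2)) *
          Real.exp (-((lam + 1) / 2) * (μ₂ ⬝ᵥ (S₂⁻¹ *ᵥ μ₂))
            + (lam / 2) * (μ₁ ⬝ᵥ (S₁⁻¹ *ᵥ μ₁))
            + (1 / 2) * (μt ⬝ᵥ (St⁻¹ *ᵥ μt))) - 1 / lam := by
  have hA₁ : (S₁⁻¹).PosDef := hS₁.inv
  have hA₂ : (S₂⁻¹).PosDef := hS₂.inv
  set M : Matrix (Fin d) (Fin d) ℝ := (lam + 1) • S₂⁻¹ - lam • S₁⁻¹ with hMdef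
  have hMpos : M.PosDef := hpos
  have hdetM : 0 < M.det := hMpos.det_pos
  have hs1 : 0 < S₁.det := hS₁.det_pos
  have hs2 : 0 < S₂.det := hS₂.det_pos
  set p : ℝ := (2 * π) ^ d with hp
  have hppos : 0 < p := by positivity
  have hdet1 : ((2 * π) • S₁).det = p * S₁.det := by
    rw [Matrix.det_smul, Fintype.card_fin]
  have hdet2 : ((2 * π) • S₂).det = p * S₂.det := by
    rw [Matrix.det_smul, Fintype.card_fin]
  set cf : ℝ := (Real.sqrt (p * S₁.det))⁻¹ with hcf
  set cg : ℝ := (Real.sqrt (p * S₂.det))⁻¹ with hcg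
  have hcfpos : 0 < cf := by rw [hcf]; positivity
  have hcgpos : 0 < cg := by rw [hcg]; positivity
  have hf' : f = fun x => cf * Real.exp (-(1/2) * ((x - μ₁) ⬝ᵥ (S₁⁻¹ *ᵥ (x - μ₁)))) := by
    rw [hf]; funext x; rw [hdet1]
  have hg' : g = fun x => cg * Real.exp (-(1/2) * ((x - μ₂) ⬝ᵥ (S₂⁻¹ *ᵥ (x - μ₂)))) := by
    rw [hg]; funext x; rw [hdet2]
  set q₁ : (Fin d → ℝ) → ℝ := fun x => -(1/2) * ((x - μ₁) ⬝ᵥ (S₁⁻¹ *ᵥ (x - μ₁))) with hq₁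
  set q₂ : (Fin d → ℝ) → ℝ := fun x => -(1/2) * ((x - μ₂) ⬝ᵥ (S₂⁻¹ *ᵥ (x - μ₂))) with hq₂
  set b : Fin d → ℝ := (lam + 1) • (S₂⁻¹ *ᵥ μ₂) - lam • (S₁⁻¹ *ᵥ μ₁) with hb
  set c₀ : ℝ := -(1/2) * ((lam + 1) * (μ₂ ⬝ᵥ (S₂⁻¹ *ᵥ μ₂)) - lam * (μ₁ ⬝ᵥ (S₁⁻¹ *ᵥ μ₁)))
    with hc₀
  -- exponent identity
  have hMx : ∀ x : Fin d → ℝ, x ⬝ᵥ (M *ᵥ x)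
      = (lam + 1) * (x ⬝ᵥ (S₂⁻¹ *ᵥ x)) - lam * (x ⬝ᵥ (S₁⁻¹ *ᵥ x)) := by
    intro x
    rw [hMdef, Matrix.sub_mulVec, dotProduct_sub, Matrix.smul_mulVec,
      Matrix.smul_mulVec, dotProduct_smul, dotProduct_smul,
      smul_eq_mul, smul_eq_mul]
  have hbx : ∀ x : Fin d → ℝ, b ⬝ᵥ x
      = (lam + 1) * ((S₂⁻¹ *ᵥ μ₂) ⬝ᵥ x) - lam * ((S₁⁻¹ *ᵥ μ₁) ⬝ᵥ x) := by
    intro x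
    rw [hb, sub_dotProduct, smul_dotProduct, smul_dotProduct,
      smul_eq_mul, smul_eq_mul]
  have hE : ∀ x : Fin d → ℝ, (lam + 1) * q₂ x - lam * q₁ x
      = -(1/2) * (x ⬝ᵥ (M *ᵥ x)) + b ⬝ᵥ x + c₀ := by
    intro x
    rw [hq₁, hq₂, hc₀, hMx x, hbx x]
    simp only
    rw [expand_quad (posdef_symm hA₂), expand_quad (posdef_symm hA₁)]
    ring
  set K1 : ℝ := (1/lam) * ((cg/cf) ^ (lam + 1)) * cf with hK1
  -- pointwise identity for term 1
  have hterm1 : ∀ x : Fin d → ℝ,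
      (1 / lam) * (g x / f x) ^ (lam + 1) * f x
        = K1 * Real.exp (-(1/2) * (x ⬝ᵥ (M *ᵥ x)) + b ⬝ᵥ x + c₀) := by
    intro x
    have hfx : f x = cf * Real.exp (q₁ x) := by rw [hf']
    have hgx : g x = cg * Real.exp (q₂ x) := by rw [hg']
    have hgf : g x / f x = (cg / cf) * Real.exp (q₂ x - q₁ x) := by
      rw [hfx, hgx, mul_div_mul_comm, Real.exp_sub]
    have hrp : (g x / f x) ^ (lam + 1)
        = (cg / cf) ^ (lam + 1) * Real.exp ((q₂ x - q₁ x) * (lam + 1)) := by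
      rw [hgf, Real.mul_rpow (by positivity) (Real.exp_nonneg _), ← Real.exp_mul]
    have hexp : Real.exp ((q₂ x - q₁ x) * (lam + 1)) * Real.exp (q₁ x)
        = Real.exp (-(1/2) * (x ⬝ᵥ (M *ᵥ x)) + b ⬝ᵥ x + c₀) := by
      rw [← Real.exp_add]
      congr 1
      linear_combination hE x
    rw [hrp, hfx, hK1]
    calc 1 / lam * ((cg / cf) ^ (lam + 1) * Real.exp ((q₂ x - q₁ x) * (lam + 1)))
          * (cf * Real.exp (q₁ x))
        = 1 / lam * (cg / cf) ^ (lam + 1) * cf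
          * (Real.exp ((q₂ x - q₁ x) * (lam + 1)) * Real.exp (q₁ x)) := by ring
      _ = _ := by rw [hexp]
  have hlamne : lam ≠ 0 := hlam.ne'
  -- pointwise identity for the whole integrand
  have hpt : (fun x : Fin d → ℝ =>
        ((1 / lam) * (g x / f x) ^ (lam + 1) - ((lam + 1) / lam) * (g x / f x) + 1) * f x)
      = fun x => K1 * Real.exp (-(1/2) * (x ⬝ᵥ (M *ᵥ x)) + b ⬝ᵥ x + c₀)
          - ((lam + 1) / lam) * g x + f x := by
    funext x
    have hfxne : f x ≠ 0 := by
      rw [hf']; simp only; positivity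
    have h2 : g x / f x * f x = g x := div_mul_cancel₀ _ hfxne
    calc ((1 / lam) * (g x / f x) ^ (lam + 1) - ((lam + 1) / lam) * (g x / f x) + 1) * f x
        = (1 / lam) * (g x / f x) ^ (lam + 1) * f x
            - ((lam + 1) / lam) * (g x / f x * f x) + f x := by ring
      _ = _ := by rw [hterm1 x, h2]
  rw [hpt]
  -- integrability
  have hI1 : Integrable (fun x : Fin d → ℝ =>
      K1 * Real.exp (-(1/2) * (x ⬝ᵥ (M *ᵥ x)) + b ⬝ᵥ x + c₀)) :=
    (gauss_lin hMpos b c₀).1.const_mul K1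
  have hI2 : Integrable (fun x : Fin d → ℝ => ((lam + 1) / lam) * g x) := by
    rw [hg']
    exact (((gaussN hA₂ μ₂).1.const_mul cg).const_mul _)
  have hI3 : Integrable f := by
    rw [hf']
    exact (gaussN hA₁ μ₁).1.const_mul cf
  have hsplit := MeasureTheory.integral_add (hI1.sub hI2) hI3
  simp only [Pi.sub_apply] at hsplit
  rw [hsplit, MeasureTheory.integral_sub hI1 hI2]
  -- compute the three integrals
  have hint3 : ∫ x : Fin d → ℝ, f x = 1 := by
    rw [hf', MeasureTheory.integral_const_mul, (gaussN hA₁ μ₁).2]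
    rw [Matrix.det_nonsing_inv, Ring.inverse_eq_inv',
      show p / (S₁.det)⁻¹ = p * S₁.det by field_simp, hcf]
    rw [inv_mul_cancel₀ (by positivity)]
  have hint2 : ∫ x : Fin d → ℝ, ((lam + 1) / lam) * g x = (lam + 1) / lam := by
    rw [MeasureTheory.integral_const_mul, hg', MeasureTheory.integral_const_mul,
      (gaussN hA₂ μ₂).2]
    rw [Matrix.det_nonsing_inv, Ring.inverse_eq_inv',
      show p / (S₂.det)⁻¹ = p * S₂.det by field_simp, hcg]
    rw [inv_mul_cancel₀ (by positivity), mul_one]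
  have hint1 : ∫ x : Fin d → ℝ, K1 * Real.exp (-(1/2) * (x ⬝ᵥ (M *ᵥ x)) + b ⬝ᵥ x + c₀)
      = K1 * (Real.sqrt (p / M.det) * Real.exp ((1/2) * (b ⬝ᵥ (M⁻¹ *ᵥ b)) + c₀)) := by
    rw [MeasureTheory.integral_const_mul, (gauss_lin hMpos b c₀).2]
  rw [hint1, hint2, hint3]
  -- now match the closed forms
  have hMunit : IsUnit M.det := isUnit_iff_ne_zero.2 hdetM.ne'
  have hStM : St = M⁻¹ := hSt
  have hStinv : St⁻¹ = M := by rw [hStM, Matrix.nonsing_inv_nonsing_inv _ hMunit]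
  have hdetSt : St.det = (M.det)⁻¹ := by
    rw [hStM, Matrix.det_nonsing_inv, Ring.inverse_eq_inv']
  have hquadt : μt ⬝ᵥ (St⁻¹ *ᵥ μt) = b ⬝ᵥ (M⁻¹ *ᵥ b) := by
    have h1 : St⁻¹ *ᵥ μt = b := by
      rw [hμt, hStinv, hStM, Matrix.mulVec_mulVec, Matrix.mul_nonsing_inv _ hMunit,
        Matrix.one_mulVec]
    rw [h1, hμt, hStM, dotProduct_comm]
  -- exponent equality
  have hexp_eq : (1/2) * (b ⬝ᵥ (M⁻¹ *ᵥ b)) + c₀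
      = -((lam + 1) / 2) * (μ₂ ⬝ᵥ (S₂⁻¹ *ᵥ μ₂)) + (lam / 2) * (μ₁ ⬝ᵥ (S₁⁻¹ *ᵥ μ₁))
        + (1 / 2) * (μt ⬝ᵥ (St⁻¹ *ᵥ μt)) := by
    rw [hquadt, hc₀]; ring
  -- constant equality
  have hconst : K1 * Real.sqrt (p / M.det)
      = (1 / lam) * (((S₁ * S₂⁻¹).det ^ (lam + 1) * St.det / S₁.det) ^ ((1 : ℝ) / 2)) := by
    have hdet12 : (S₁ * S₂⁻¹).det = S₁.det * (S₂.det)⁻¹ := by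
      rw [Matrix.det_mul, Matrix.det_nonsing_inv, Ring.inverse_eq_inv']
    have hcgcf : cg / cf = Real.sqrt (S₁.det / S₂.det) := by
      rw [hcg, hcf, div_eq_mul_inv, inv_inv, mul_comm, ← div_eq_mul_inv,
        ← Real.sqrt_div (by positivity), mul_div_mul_left _ _ hppos.ne']
    have hcfM : cf * Real.sqrt (p / M.det) = Real.sqrt ((M.det)⁻¹ / S₁.det) := by
      rw [hcf, inv_mul_eq_div, ← Real.sqrt_div (by positivity)]
      congr 1
      field_simp
    rw [hK1]
    calc 1 / lam * (cg / cf) ^ (lam + 1) * cf * Real.sqrt (p / M.det)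
        = 1 / lam * ((cg / cf) ^ (lam + 1) * (cf * Real.sqrt (p / M.det))) := by ring
      _ = _ := by
          rw [hcgcf, hcfM]
          congr 1
          rw [Real.sqrt_eq_rpow, Real.sqrt_eq_rpow,
            ← Real.rpow_mul (div_pos hs1 hs2).le,
            show (1/2 : ℝ) * (lam + 1) = (lam + 1) * (1/2) by ring,
            Real.rpow_mul (div_pos hs1 hs2).le,
            ← Real.mul_rpow (Real.rpow_nonneg (div_pos hs1 hs2).le _)
              (div_nonneg (inv_nonneg.2 hdetM.le) hs1.le)]
          congr 1
          rw [hdet12, hdetSt, div_eq_mul_inv S₁.det S₂.det, mul_div_assoc]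
  rw [hexp_eq] at hint1 ⊢
  rw [← mul_assoc] at *
  rw [hconst]
  field_simp
  ring
end

section
/- Let (Ω, ℱ, P) be a probability space, α > 0, β ∈ ℝ, and let H : Ω → ℝ be measurable. Define 𝓔*(ω) = exp((−β − H(ω))/α), and assume 𝓔*·H, 𝓔*·log 𝓔* and 𝓔* are P-integrable. Then for every measurable 𝓔 : Ω → [0, ∞) such that 𝓔·H, 𝓔·log 𝓔 and 𝓔 are P-integrable (with the convention 0·log 0 = 0), one has ∫ (𝓔*·H + α·(𝓔* log 𝓔* − 𝓔* + 1) + β·𝓔*) dP ≤ ∫ (𝓔·H + α·(𝓔 log 𝓔 − 𝓔 + 1) + β·𝓔) dP. -/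
open Real Set MeasureTheory

/-- Kullback–Leibler case: `𝓔* = exp((−β − H)/α)` minimizes the inner Lagrangian
`∫ 𝓔·H + α·(𝓔 log 𝓔 − 𝓔 + 1) + β·𝓔 dP` over nonnegative measurable `𝓔`
(with the convention `0·log 0 = 0`, which holds for `Real.log`). -/
theorem stmt_8 {Ω : Type*} [MeasurableSpace Ω] (P : Measure Ω) [IsProbabilityMeasure P]
    (α β : ℝ) (hα : 0 < α)
    (H : Ω → ℝ) (hH : Measurable H)
    (Estar : Ω → ℝ) (hEstar : Estar = fun ω => Real.exp ((-β - H ω) / α))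
    (hint1 : Integrable (fun ω => Estar ω * H ω) P)
    (hint2 : Integrable (fun ω => Estar ω * Real.log (Estar ω)) P)
    (hint3 : Integrable Estar P) :
    ∀ E : Ω → ℝ, Measurable E → (∀ ω, 0 ≤ E ω) →
      Integrable (fun ω => E ω * H ω) P →
      Integrable (fun ω => E ω * Real.log (E ω)) P →
      Integrable E P →
      ∫ ω, (Estar ω * H ω + α * (Estar ω * Real.log (Estar ω) - Estar ω + 1)
          + β * Estar ω) ∂P ≤
        ∫ ω, (E ω * H ω + α * (E ω * Real.log (E ω) - E ω + 1) + β * E ω) ∂P := by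
  intro E hE hE0 hi1 hi2 hi3
  apply integral_mono
  · exact (hint1.add (((hint2.sub hint3).add (integrable_const 1)).const_mul α)).add
      (hint3.const_mul β)
  · exact (hi1.add (((hi2.sub hi3).add (integrable_const 1)).const_mul α)).add
      (hi3.const_mul β)
  · intro ω
    simp only
    set h := H ω with hh
    set e := E ω with he
    have hs : Estar ω = Real.exp ((-β - h) / α) := by rw [hEstar]
    have hspos : 0 < Estar ω := hs ▸ Real.exp_pos _
    have hlogs : Real.log (Estar ω) = (-β - h) / α := by rw [hs, Real.log_exp]
    set s := Estar ω with hsdef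
    -- key inequality: e * log e - e * log s - e + s ≥ 0
    have key : 0 ≤ e * Real.log e - e * Real.log s - e + s := by
      rcases eq_or_lt_of_le (hE0 ω) with h0 | hpos
      · have he0 : e = 0 := h0.symm
        rw [he0]; simp [hspos.le]
      · have hlt : Real.log (s / e) ≤ s / e - 1 := Real.log_le_sub_one_of_pos (by positivity)
        rw [Real.log_div (ne_of_gt hspos) (ne_of_gt hpos)] at hlt
        have := mul_le_mul_of_nonneg_left hlt (le_of_lt hpos)
        have hne : e ≠ 0 := ne_of_gt hpos
        field_simp at this
        have hlt' : Real.log s - Real.log e ≤ s / e - 1 := hlt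
        have hmul : e * (s / e - 1) = s - e := by field_simp
        nlinarith [mul_le_mul_of_nonneg_left hlt' (hpos.le : (0:ℝ) ≤ e)]
    have := mul_le_mul_of_nonneg_left key (le_of_lt hα)
    have hα' : α ≠ 0 := ne_of_gt hα
    have hls : α * Real.log s = -β - h := by rw [hlogs]; field_simp
    have h1 : e * (α * Real.log s) = e * (-β - h) := by rw [hls]
    have h2 : s * (α * Real.log s) = s * (-β - h) := by rw [hls]
    nlinarith [this, h1, h2]
end
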